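/- Let $\Omega_0 \subset \mathbb{R}^N$ be a set of finite perimeter with Ahlfors regular topological boundary and $\operatorname{spt}\mu_{\Omega_0} = \partial\Omega_0$. Define $\mathcal{O}_0 = \{x : \exists r > 0, |B(x,r) \setminus \Omega_0| = 0\}$ and $\mathcal{O}_1 = \{x : \exists r > 0, |B(x,r) \cap \Omega_0| = 0\}$. Then $\mathcal{O}_0$ and $\mathcal{O}_1$ are open, $\mathcal{O}_0$ is equivalent to $\Omega_0$ (i.e., $|\mathcal{O}_0 \Delta \Omega_0| = 0$), and $\partial\mathcal{O}_0 = \partial\mathcal{O}_1 = \operatorname{spt}\mu_{\mathcal{O}_0} = \operatorname{spt}\mu_{\Omega_0}$. -/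

import Mathlib

open MeasureTheory Metric Filter Set Bornology
open scoped ENNReal Topology NNReal RealInnerProductSpace

noncomputable section

/-- Points of Lebesgue density `1` of a set in `ℝ^N`. -/
def densityOnePts {N : ℕ} (E : Set (EuclideanSpace ℝ (Fin N))) :
    Set (EuclideanSpace ℝ (Fin N)) :=
  {x | Tendsto (fun r : ℝ => volume (E ∩ ball x r) / volume (ball x r)) (𝓝[>] 0) (𝓝 1)}

/-- Points of Lebesgue density `0` of a set in `ℝ^N`. -/
def densityZeroPts {N : ℕ} (E : Set (EuclideanSpace ℝ (Fin N))) :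
    Set (EuclideanSpace ℝ (Fin N)) :=
  {x | Tendsto (fun r : ℝ => volume (E ∩ ball x r) / volume (ball x r)) (𝓝[>] 0) (𝓝 0)}

/-- The essential boundary `∂*E`: points of density neither `0` nor `1`. -/
def essBdry {N : ℕ} (E : Set (EuclideanSpace ℝ (Fin N))) :
    Set (EuclideanSpace ℝ (Fin N)) :=
  (densityOnePts E ∪ densityZeroPts E)ᶜ

/-- Relative perimeter of `E` in `Ω` (De Giorgi–Federer):
`P(E,Ω) = H^{N-1}(∂*E ∩ Ω)`. -/
def perim {N : ℕ} (E Ω : Set (EuclideanSpace ℝ (Fin N))) : ℝ≥0∞ :=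
  μH[(N : ℝ) - 1] (essBdry E ∩ Ω)

/-- Support of the Gauss–Green measure `μ_E`, whose total variation is
`H^{N-1} ⌊ ∂*E`. -/
def sptGG {N : ℕ} (E : Set (EuclideanSpace ℝ (Fin N))) :
    Set (EuclideanSpace ℝ (Fin N)) :=
  {x | ∀ r : ℝ, 0 < r → 0 < μH[(N : ℝ) - 1] (essBdry E ∩ ball x r)}

/-- The Lebesgue volume `ω_N` of the unit ball of `ℝ^N`. -/
def omegaVol (N : ℕ) : ℝ := (volume (ball (0 : EuclideanSpace ℝ (Fin N)) 1)).toReal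

/-- The measure-theoretic interior of `Ω₀`. -/
def O0set {N : ℕ} (Om0 : Set (EuclideanSpace ℝ (Fin N))) : Set (EuclideanSpace ℝ (Fin N)) :=
  {x | ∃ r : ℝ, 0 < r ∧ volume (ball x r \ Om0) = 0}

/-- The measure-theoretic exterior of `Ω₀`. -/
def O1set {N : ℕ} (Om0 : Set (EuclideanSpace ℝ (Fin N))) : Set (EuclideanSpace ℝ (Fin N)) :=
  {x | ∃ r : ℝ, 0 < r ∧ volume (ball x r ∩ Om0) = 0}

section Aux

variable {N : ℕ} {Om0 : Set (EuclideanSpace ℝ (Fin N))}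

lemma aux_O0_isOpen : IsOpen (O0set Om0) := by
  rw [Metric.isOpen_iff]
  rintro x ⟨r, hr, hnull⟩
  refine ⟨r/2, by linarith, fun y hy => ⟨r/2, by linarith, ?_⟩⟩
  refine measure_mono_null (diff_subset_diff_left (ball_subset_ball' ?_)) hnull
  have := mem_ball.mp hy; linarith

lemma aux_O1_isOpen : IsOpen (O1set Om0) := by
  rw [Metric.isOpen_iff]
  rintro x ⟨r, hr, hnull⟩
  refine ⟨r/2, by linarith, fun y hy => ⟨r/2, by linarith, ?_⟩⟩
  refine measure_mono_null (inter_subset_inter_left _ (ball_subset_ball' ?_)) hnull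
  have := mem_ball.mp hy; linarith

lemma aux_disjoint : O0set Om0 ∩ O1set Om0 = ∅ := by
  rw [eq_empty_iff_forall_notMem]
  rintro x ⟨⟨r0, hr0, h0⟩, ⟨r1, hr1, h1⟩⟩
  have hball : volume (ball x (min r0 r1)) = 0 := by
    have hsub : ball x (min r0 r1) ⊆ (ball x r0 \ Om0) ∪ (ball x r1 ∩ Om0) := by
      intro z hz
      by_cases hzo : z ∈ Om0
      · exact Or.inr ⟨ball_subset_ball (min_le_right _ _) hz, hzo⟩
      · exact Or.inl ⟨ball_subset_ball (min_le_left _ _) hz, hzo⟩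
    exact measure_mono_null hsub (measure_union_null h0 h1)
  exact absurd hball (measure_ball_pos volume x (lt_min hr0 hr1)).ne'

lemma aux_vol_O0_diff : volume (O0set Om0 \ Om0) = 0 := by
  refine measure_null_of_locally_null _ fun x hx => ?_
  obtain ⟨r, hr, hnull⟩ := hx.1
  refine ⟨(O0set Om0 \ Om0) ∩ ball x r,
    inter_mem_nhdsWithin _ (ball_mem_nhds x hr), ?_⟩
  refine measure_mono_null (fun z hz => ?_) hnull
  exact ⟨hz.2, hz.1.2⟩

lemma aux_vol_O1_inter : volume (O1set Om0 ∩ Om0) = 0 := by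
  refine measure_null_of_locally_null _ fun x hx => ?_
  obtain ⟨r, hr, hnull⟩ := hx.1
  refine ⟨(O1set Om0 ∩ Om0) ∩ ball x r,
    inter_mem_nhdsWithin _ (ball_mem_nhds x hr), ?_⟩
  refine measure_mono_null (fun z hz => ?_) hnull
  exact ⟨hz.2, hz.1.2⟩

/-- If a ball is a.e. inside `Om0`, all its points have density one. -/
lemma aux_essBdry_empty_O0 {x : EuclideanSpace ℝ (Fin N)} {r : ℝ}
    (hnull : volume (ball x r \ Om0) = 0) : essBdry Om0 ∩ ball x r = ∅ := by
  rw [eq_empty_iff_forall_notMem]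
  rintro y ⟨hyb, hy⟩
  refine hyb (Or.inl ?_)
  have hδ : 0 < r - dist y x := by have := mem_ball.mp hy; linarith
  have hev : ∀ᶠ s in 𝓝[>] (0 : ℝ),
      volume (Om0 ∩ ball y s) / volume (ball y s) = 1 := by
    filter_upwards [Ioo_mem_nhdsGT_of_mem (left_mem_Ico.mpr hδ)] with s hs
    have hsub : ball y s ⊆ ball x r := ball_subset_ball' (by linarith [hs.2])
    have hn : volume (ball y s \ Om0) = 0 :=
      measure_mono_null (diff_subset_diff_left hsub) hnull
    have h1 : volume (Om0 ∩ ball y s) = volume (ball y s) := by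
      rw [inter_comm, ← diff_diff_right_self]
      exact measure_diff_null hn
    rw [h1]
    exact ENNReal.div_self (measure_ball_pos volume y hs.1).ne' measure_ball_lt_top.ne
  exact Tendsto.congr' (hev.mono fun s h => h.symm) tendsto_const_nhds

/-- If a ball is a.e. outside `Om0`, all its points have density zero. -/
lemma aux_essBdry_empty_O1 {x : EuclideanSpace ℝ (Fin N)} {r : ℝ}
    (hnull : volume (ball x r ∩ Om0) = 0) : essBdry Om0 ∩ ball x r = ∅ := by
  rw [eq_empty_iff_forall_notMem]
  rintro y ⟨hyb, hy⟩
  refine hyb (Or.inr ?_)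
  have hδ : 0 < r - dist y x := by have := mem_ball.mp hy; linarith
  have hev : ∀ᶠ s in 𝓝[>] (0 : ℝ),
      volume (Om0 ∩ ball y s) / volume (ball y s) = 0 := by
    filter_upwards [Ioo_mem_nhdsGT_of_mem (left_mem_Ico.mpr hδ)] with s hs
    have hsub : ball y s ⊆ ball x r := ball_subset_ball' (by linarith [hs.2])
    have hn : volume (Om0 ∩ ball y s) = 0 := by
      refine measure_mono_null (fun z hz => ?_) hnull
      exact ⟨hsub hz.2, hz.1⟩
    rw [hn, ENNReal.zero_div]
  exact Tendsto.congr' (hev.mono fun s h => h.symm) tendsto_const_nhds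

/-- Under the support hypothesis, the frontier is exactly `(O0 ∪ O1)ᶜ`. -/
lemma aux_frontier_eq (hspt : sptGG Om0 = frontier Om0) :
    frontier Om0 = (O0set Om0 ∪ O1set Om0)ᶜ := by
  apply Subset.antisymm
  · rintro x hx (⟨r, hr, hnull⟩ | ⟨r, hr, hnull⟩)
    · have h0 := (hspt ▸ hx) r hr
      rw [aux_essBdry_empty_O0 hnull, measure_empty] at h0
      exact lt_irrefl _ h0
    · have h0 := (hspt ▸ hx) r hr
      rw [aux_essBdry_empty_O1 hnull, measure_empty] at h0
      exact lt_irrefl _ h0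
  · intro x hx
    rw [mem_compl_iff, mem_union, not_or] at hx
    rw [frontier_eq_closure_inter_closure]
    constructor
    · rw [Metric.mem_closure_iff]
      intro ε hε
      have h1 : volume (ball x ε ∩ Om0) ≠ 0 := fun h => hx.2 ⟨ε, hε, h⟩
      have h2 : (ball x ε ∩ Om0).Nonempty := by
        rw [nonempty_iff_ne_empty]
        intro h; exact h1 (by rw [h, measure_empty])
      obtain ⟨y, hy⟩ := h2
      exact ⟨y, hy.2, by rw [dist_comm]; exact mem_ball.mp hy.1⟩
    · rw [Metric.mem_closure_iff]
      intro ε hε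
      have h1 : volume (ball x ε \ Om0) ≠ 0 := fun h => hx.1 ⟨ε, hε, h⟩
      have h2 : (ball x ε \ Om0).Nonempty := by
        rw [nonempty_iff_ne_empty]
        intro h; exact h1 (by rw [h, measure_empty])
      obtain ⟨y, hy⟩ := h2
      exact ⟨y, hy.2, by rw [dist_comm]; exact mem_ball.mp hy.1⟩


lemma aux_vol_frontier_zero
    (hAR : ∃ C1 C2 : ℝ, 0 < C1 ∧ 0 < C2 ∧ ∀ x ∈ frontier Om0, ∀ r : ℝ, 0 < r → r ≤ 1 →
      ENNReal.ofReal (C1 * r ^ (N - 1)) ≤ μH[(N : ℝ) - 1] (frontier Om0 ∩ ball x r) ∧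
      μH[(N : ℝ) - 1] (frontier Om0 ∩ ball x r) ≤ ENNReal.ofReal (C2 * r ^ (N - 1))) :
    volume (frontier Om0) = 0 := by
  rcases Nat.eq_zero_or_pos N with hN | hN
  · subst hN
    haveI : Subsingleton (EuclideanSpace ℝ (Fin 0)) :=
      ⟨fun a b => PiLp.ext fun i => Fin.elim0 i⟩
    rcases eq_empty_or_nonempty Om0 with h | h
    · rw [h, frontier_empty, measure_empty]
    · have : Om0 = univ := eq_univ_of_forall fun z => by
        obtain ⟨a, ha⟩ := h; rwa [Subsingleton.elim z a]
      rw [this, frontier_univ, measure_empty]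
  · obtain ⟨C1, C2, hC1, hC2, hbound⟩ := hAR
    refine measure_null_of_locally_null _ fun x hx => ?_
    refine ⟨frontier Om0 ∩ ball x 1, inter_mem_nhdsWithin _ (ball_mem_nhds x one_pos), ?_⟩
    set u := frontier Om0 ∩ ball x 1 with hu
    have hfin : μH[(N : ℝ) - 1] u ≠ ∞ :=
      ((hbound x hx 1 one_pos le_rfl).2.trans_lt ENNReal.ofReal_lt_top).ne
    have hcast : (((N - 1 : ℕ) : ℝ≥0) : ℝ) = (N : ℝ) - 1 := by
      rw [NNReal.coe_natCast, Nat.cast_sub hN, Nat.cast_one]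
    have hdim : dimH u ≤ (((N - 1 : ℕ) : ℝ≥0) : ℝ≥0∞) := by
      refine dimH_le_of_hausdorffMeasure_ne_top ?_
      rw [hcast]; exact hfin
    set e := (MeasurableEquiv.toLp 2 (Fin N → ℝ)).symm with he
    have hlip : LipschitzWith 1 ⇑e := by
      rw [he]
      exact PiLp.lipschitzWith_ofLp 2 _
    have himg : dimH (⇑e '' u) < ((N : ℝ≥0) : ℝ≥0∞) := by
      refine lt_of_le_of_lt ((hlip.dimH_image_le u).trans hdim) ?_
      exact_mod_cast Nat.sub_lt hN one_pos
    have hzero : μH[((N : ℝ≥0) : ℝ)] (⇑e '' u) = 0 :=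
      hausdorffMeasure_of_dimH_lt himg
    have hvol_img : volume (⇑e '' u) = 0 := by
      rw [← hausdorffMeasure_pi_real (ι := Fin N)]
      have hc : ((Fintype.card (Fin N) : ℝ)) = ((N : ℝ≥0) : ℝ) := by
        simp
      rw [hc]; exact hzero
    have humeas : MeasurableSet u :=
      isClosed_frontier.measurableSet.inter measurableSet_ball
    have hvq : volume u = volume (⇑e '' u) := by
      rw [MeasurableEquiv.image_eq_preimage_symm]
      exact (((EuclideanSpace.volume_preserving_symm_measurableEquiv_toLp (Fin N)).symm
        e).measure_preimage humeas.nullMeasurableSet).symm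
    rw [hvq, hvol_img]


lemma aux_compl_sub_frontier (hspt : sptGG Om0 = frontier Om0)
    {z : EuclideanSpace ℝ (Fin N)} (h0 : z ∉ O0set Om0) (h1 : z ∉ O1set Om0) :
    z ∈ frontier Om0 := by
  rw [aux_frontier_eq hspt]
  rintro (h | h)
  exacts [h0 h, h1 h]

lemma aux_ball_inter_nonempty (hspt : sptGG Om0 = frontier Om0)
    (hvol : volume (frontier Om0) = 0) {x : EuclideanSpace ℝ (Fin N)}
    (hx : x ∈ frontier Om0) {ε : ℝ} (hε : 0 < ε) :
    (ball x ε ∩ O0set Om0).Nonempty ∧ (ball x ε ∩ O1set Om0).Nonempty := by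
  have hxc : x ∉ O0set Om0 ∧ x ∉ O1set Om0 := by
    have := (aux_frontier_eq hspt) ▸ hx
    rw [mem_compl_iff, mem_union, not_or] at this
    exact this
  constructor
  · rw [nonempty_iff_ne_empty]
    intro hemp
    have hsub : ball x ε ∩ Om0 ⊆ (O1set Om0 ∩ Om0) ∪ frontier Om0 := by
      intro z hz
      have hz0 : z ∉ O0set Om0 := fun h =>
        (eq_empty_iff_forall_notMem.mp hemp z) ⟨hz.1, h⟩
      by_cases hz1 : z ∈ O1set Om0
      · exact Or.inl ⟨hz1, hz.2⟩
      · exact Or.inr (aux_compl_sub_frontier hspt hz0 hz1)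
    have : volume (ball x ε ∩ Om0) = 0 :=
      measure_mono_null hsub (measure_union_null aux_vol_O1_inter hvol)
    exact hxc.2 ⟨ε, hε, this⟩
  · rw [nonempty_iff_ne_empty]
    intro hemp
    have hsub : ball x ε \ Om0 ⊆ (O0set Om0 \ Om0) ∪ frontier Om0 := by
      intro z hz
      have hz1 : z ∉ O1set Om0 := fun h =>
        (eq_empty_iff_forall_notMem.mp hemp z) ⟨hz.1, h⟩
      by_cases hz0 : z ∈ O0set Om0
      · exact Or.inl ⟨hz0, hz.2⟩
      · exact Or.inr (aux_compl_sub_frontier hspt hz0 hz1)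
    have : volume (ball x ε \ Om0) = 0 :=
      measure_mono_null hsub (measure_union_null aux_vol_O0_diff hvol)
    exact hxc.1 ⟨ε, hε, this⟩

lemma aux_frontier_O0 (hspt : sptGG Om0 = frontier Om0)
    (hvol : volume (frontier Om0) = 0) :
    frontier (O0set Om0) = frontier Om0 := by
  rw [aux_O0_isOpen.frontier_eq]
  apply Subset.antisymm
  · rintro x ⟨hxc, hx0⟩
    by_cases hx1 : x ∈ O1set Om0
    · exfalso
      obtain ⟨δ, hδ, hsub⟩ := Metric.isOpen_iff.mp aux_O1_isOpen x hx1
      obtain ⟨b, hb0, hbd⟩ := Metric.mem_closure_iff.mp hxc δ hδ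
      have hb1 : b ∈ O1set Om0 := hsub (by rwa [mem_ball, dist_comm])
      exact (eq_empty_iff_forall_notMem.mp aux_disjoint b) ⟨hb0, hb1⟩
    · exact aux_compl_sub_frontier hspt hx0 hx1
  · intro x hx
    have hxc : x ∉ O0set Om0 ∧ x ∉ O1set Om0 := by
      have := (aux_frontier_eq hspt) ▸ hx
      rw [mem_compl_iff, mem_union, not_or] at this
      exact this
    refine ⟨Metric.mem_closure_iff.mpr fun ε hε => ?_, hxc.1⟩
    obtain ⟨y, hyb, hy0⟩ := (aux_ball_inter_nonempty hspt hvol hx hε).1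
    exact ⟨y, hy0, by rw [dist_comm]; exact mem_ball.mp hyb⟩

lemma aux_frontier_O1 (hspt : sptGG Om0 = frontier Om0)
    (hvol : volume (frontier Om0) = 0) :
    frontier (O1set Om0) = frontier Om0 := by
  rw [aux_O1_isOpen.frontier_eq]
  apply Subset.antisymm
  · rintro x ⟨hxc, hx1⟩
    by_cases hx0 : x ∈ O0set Om0
    · exfalso
      obtain ⟨δ, hδ, hsub⟩ := Metric.isOpen_iff.mp aux_O0_isOpen x hx0
      obtain ⟨b, hb1, hbd⟩ := Metric.mem_closure_iff.mp hxc δ hδ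
      have hb0 : b ∈ O0set Om0 := hsub (by rwa [mem_ball, dist_comm])
      exact (eq_empty_iff_forall_notMem.mp aux_disjoint b) ⟨hb0, hb1⟩
    · exact aux_compl_sub_frontier hspt hx0 hx1
  · intro x hx
    have hxc : x ∉ O0set Om0 ∧ x ∉ O1set Om0 := by
      have := (aux_frontier_eq hspt) ▸ hx
      rw [mem_compl_iff, mem_union, not_or] at this
      exact this
    refine ⟨Metric.mem_closure_iff.mpr fun ε hε => ?_, hxc.2⟩
    obtain ⟨y, hyb, hy1⟩ := (aux_ball_inter_nonempty hspt hvol hx hε).2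
    exact ⟨y, hy1, by rw [dist_comm]; exact mem_ball.mp hyb⟩

lemma aux_vol_Om0_diff_O0 (hspt : sptGG Om0 = frontier Om0)
    (hvol : volume (frontier Om0) = 0) :
    volume (Om0 \ O0set Om0) = 0 := by
  refine measure_mono_null
    (t := (O1set Om0 ∩ Om0) ∪ frontier Om0) (fun z hz => ?_)
    (measure_union_null aux_vol_O1_inter hvol)
  by_cases hz1 : z ∈ O1set Om0
  · exact Or.inl ⟨hz1, hz.1⟩
  · exact Or.inr (aux_compl_sub_frontier hspt hz.2 hz1)

lemma aux_sptGG_congr (hae : O0set Om0 =ᵐ[volume] Om0) :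
    sptGG (O0set Om0) = sptGG Om0 := by
  have hk : ∀ (x : EuclideanSpace ℝ (Fin N)) (r : ℝ),
      volume (O0set Om0 ∩ ball x r) = volume (Om0 ∩ ball x r) := fun x r =>
    measure_congr (hae.inter (Filter.EventuallyEq.refl _ _))
  have hfun : ∀ x : EuclideanSpace ℝ (Fin N),
      (fun r : ℝ => volume (O0set Om0 ∩ ball x r) / volume (ball x r)) =
      (fun r : ℝ => volume (Om0 ∩ ball x r) / volume (ball x r)) := fun x =>
    funext fun r => by rw [hk x r]
  have h1 : densityOnePts (O0set Om0) = densityOnePts Om0 := by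
    unfold densityOnePts; ext x
    rw [mem_setOf_eq, mem_setOf_eq, hfun x]
  have h0 : densityZeroPts (O0set Om0) = densityZeroPts Om0 := by
    unfold densityZeroPts; ext x
    rw [mem_setOf_eq, mem_setOf_eq, hfun x]
  have hb : essBdry (O0set Om0) = essBdry Om0 := by
    unfold essBdry; rw [h1, h0]
  unfold sptGG; rw [hb]

end Aux

theorem stmt_11 {N : ℕ} (Om0 : Set (EuclideanSpace ℝ (Fin N))) (hmeas : MeasurableSet Om0)
    (hper : perim Om0 Set.univ < ⊤)
    (hAR : ∃ C1 C2 : ℝ, 0 < C1 ∧ 0 < C2 ∧ ∀ x ∈ frontier Om0, ∀ r : ℝ, 0 < r → r ≤ 1 →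
      ENNReal.ofReal (C1 * r ^ (N - 1)) ≤ μH[(N : ℝ) - 1] (frontier Om0 ∩ ball x r) ∧
      μH[(N : ℝ) - 1] (frontier Om0 ∩ ball x r) ≤ ENNReal.ofReal (C2 * r ^ (N - 1)))
    (hspt : sptGG Om0 = frontier Om0) :
    IsOpen (O0set Om0) ∧ IsOpen (O1set Om0) ∧
    volume (symmDiff (O0set Om0) Om0) = 0 ∧
    frontier (O0set Om0) = frontier (O1set Om0) ∧
    frontier (O0set Om0) = sptGG (O0set Om0) ∧
    sptGG (O0set Om0) = sptGG Om0 := by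
  have hvol : volume (frontier Om0) = 0 := aux_vol_frontier_zero hAR
  have hsym : volume (symmDiff (O0set Om0) Om0) = 0 := by
    rw [Set.symmDiff_def]
    exact measure_union_null aux_vol_O0_diff (aux_vol_Om0_diff_O0 hspt hvol)
  have hae : O0set Om0 =ᵐ[volume] Om0 := measure_symmDiff_eq_zero_iff.mp hsym
  refine ⟨aux_O0_isOpen, aux_O1_isOpen, hsym, ?_, ?_, aux_sptGG_congr hae⟩
  · rw [aux_frontier_O0 hspt hvol, aux_frontier_O1 hspt hvol]
  · rw [aux_frontier_O0 hspt hvol, aux_sptGG_congr hae, hspt]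

end
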